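/- arXiv:2307.06324 — 4 statements merged into one kernel-verified Lean document; each statement's English description precedes it below -/
import Mathlib

section
/- Let t ≥ 1, let h = (h_0,…,h_{t−1}) ∈ ℝ^t be ε-straightforward with parameter Δ ∈ (0,1/2] for some ε ≥ 0, and set H := Σ_{i=0}^{t−1}(h_i − ε); assume 0 < H·Δ < 1. Let f : ℝ^n → ℝ be convex and L-smooth with a minimizer x_⋆, let x_0 ∈ ℝ^n, assume D := sup{‖x − x_⋆‖₂ : f(x) ≤ f(x_0)} is finite, and run gradient descent with pattern h from x_0. Define s̄ := ⌈ log((f(x_0) − f(x_⋆))/(LD²Δ)) / log(1/(1 − HΔ)) ⌉ if f(x_0) − f(x_⋆) > LD²Δ and s̄ := 0 otherwise. Then for every s ∈ ℕ, writing T = s·t: if s ≤ s̄ then f(x_T) − f(x_⋆) ≤ (1 − HΔ)^s · (f(x_0) − f(x_⋆)), and if s > s̄ then f(x_T) − f(x_⋆) ≤ LD² / (H·(s − s̄) + 1/Δ) = LD² / ((avg(h) − ε)·(T − s̄·t) + 1/Δ), where avg(h) := (Σ_{i=0}^{t−1} h_i)/t. -/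
open scoped BigOperators

set_option maxHeartbeats 2000000

noncomputable section

/-- `ℝ^n` with the Euclidean norm. -/
abbrev E (n : ℕ) : Type := EuclideanSpace ℝ (Fin n)

/-- A differentiable `f : ℝ^n → ℝ` is `L`-smooth if its gradient is `L`-Lipschitz. -/
def IsLSmooth {n : ℕ} (L : ℝ) (f : E n → ℝ) : Prop :=
  Differentiable ℝ f ∧ ∀ x y : E n, ‖gradient f x - gradient f y‖ ≤ L * ‖x - y‖

/-- A stepsize pattern `h` (of length `t`, given as the first `t` values of `h : ℕ → ℝ`)
is `ε`-straightforward with parameter `Δ`: for every dimension `n`, every `L, D > 0`,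
every `δ ∈ [0, L·D²·Δ]`, every convex `L`-smooth `g` with minimizer `ystar`, and every
initialization `y 0` with `‖y 0 - ystar‖ ≤ D` and `g (y 0) - g ystar ≤ δ`, one pass of
gradient descent through the pattern satisfies
`g (y t) - g ystar ≤ δ - (Σ_{i<t}(h i - ε)/(L·D²))·δ²`. -/
def IsStraightforward (t : ℕ) (h : ℕ → ℝ) (ε Δ : ℝ) : Prop :=
  ∀ (n : ℕ) (L D δ : ℝ), 0 < L → 0 < D → 0 ≤ δ → δ ≤ L * D ^ 2 * Δ →
    ∀ g : E n → ℝ, ConvexOn ℝ Set.univ g → IsLSmooth L g →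
      ∀ ystar : E n, (∀ z, g ystar ≤ g z) →
        ∀ y : ℕ → E n, ‖y 0 - ystar‖ ≤ D → g (y 0) - g ystar ≤ δ →
          (∀ k < t, y (k + 1) = y k - (h k / L) • gradient g (y k)) →
          g (y t) - g ystar ≤ δ - ((∑ i ∈ Finset.range t, (h i - ε)) / (L * D ^ 2)) * δ ^ 2


/-- Theorem 3.1 (main convergence rate for straightforward stepsize patterns):
initial linear convergence for `s ≤ s̄`, then the sublinear rate
`f (x (s t)) - f xstar ≤ L D² / (H (s - s̄) + 1/Δ)`
(equivalently `L D² / ((avg h - ε)(T - s̄ t) + 1/Δ)` with `T = s t`). -/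
theorem straightforward_rate {n : ℕ} (t : ℕ) (ht : 1 ≤ t) (h : ℕ → ℝ)
    (ε Δ : ℝ) (hε : 0 ≤ ε) (hΔ : 0 < Δ) (hΔhalf : Δ ≤ 1 / 2)
    (hsf : IsStraightforward t h ε Δ)
    (H : ℝ) (hH : H = ∑ i ∈ Finset.range t, (h i - ε))
    (hHΔpos : 0 < H * Δ) (hHΔlt : H * Δ < 1)
    (L : ℝ) (hL : 0 < L)
    (f : E n → ℝ) (hconv : ConvexOn ℝ Set.univ f) (hsmooth : IsLSmooth L f)
    (xstar : E n) (hmin : ∀ z, f xstar ≤ f z)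
    (x : ℕ → E n) (x0 : E n) (hx0 : x 0 = x0)
    (D : ℝ) (hD : IsLUB {r : ℝ | ∃ z : E n, f z ≤ f x0 ∧ r = ‖z - xstar‖} D)
    (hrec : ∀ k : ℕ, x (k + 1) = x k - (h (k % t) / L) • gradient f (x k))
    (sbar : ℕ)
    (hsbar : sbar =
      if L * D ^ 2 * Δ < f x0 - f xstar then
        ⌈Real.log ((f x0 - f xstar) / (L * D ^ 2 * Δ)) / Real.log (1 / (1 - H * Δ))⌉₊
      else 0) :
    ∀ s : ℕ,
      (s ≤ sbar →
        f (x (s * t)) - f xstar ≤ (1 - H * Δ) ^ s * (f x0 - f xstar)) ∧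
      (sbar < s →
        f (x (s * t)) - f xstar ≤ L * D ^ 2 / (H * ((s : ℝ) - (sbar : ℝ)) + 1 / Δ)) := by
  have hH0 : 0 < H := by nlinarith
  have hu0 : 0 < 1 - H * Δ := by linarith
  have hx0norm : ‖x 0 - xstar‖ ≤ D := hD.1 ⟨x 0, by rw [hx0], rfl⟩
  have hDnn : 0 ≤ D := le_trans (norm_nonneg _) hx0norm
  have hδ0nn : 0 ≤ f x0 - f xstar := by have := hmin x0; linarith
  -- if D = 0 then x0 = xstar and the initial gap is 0
  have hD0gap : D = 0 → f x0 - f xstar = 0 := by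
    intro hD0
    have : x 0 = xstar := by
      have : ‖x 0 - xstar‖ ≤ 0 := hD0 ▸ hx0norm
      have := le_antisymm this (norm_nonneg _)
      rwa [norm_eq_zero, sub_eq_zero] at this
    rw [← hx0, this]; ring
  have hDpos_of_cond : L * D ^ 2 * Δ < f x0 - f xstar → 0 < D := by
    intro hc
    rcases hDnn.lt_or_eq with hp | hp
    · exact hp
    · exfalso; rw [← hp] at hc; rw [hD0gap hp.symm] at hc; nlinarith
  -- key one-pass lemma
  have key : ∀ (s : ℕ) (D' δ : ℝ), 0 < D' → 0 ≤ δ → δ ≤ L * D' ^ 2 * Δ →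
      ‖x (s * t) - xstar‖ ≤ D' → f (x (s * t)) - f xstar ≤ δ →
      f (x ((s + 1) * t)) - f xstar ≤ δ - (H / (L * D' ^ 2)) * δ ^ 2 := by
    intro s D' δ hD' hδnn hδle hnorm hgap
    have hst : (s + 1) * t = s * t + t := by ring
    rw [hst, hH]
    exact hsf n L D' δ hL hD' hδnn hδle f hconv hsmooth xstar hmin
      (fun k => x (s * t + k)) (by simpa using hnorm) (by simpa using hgap)
      (fun k hk => by
        have hmod : (s * t + k) % t = k := by
          rw [mul_comm, Nat.mul_add_mod, Nat.mod_eq_of_lt hk]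
        have := hrec (s * t + k)
        rw [hmod] at this
        simpa [Nat.add_assoc] using this)
  -- log facts
  have hlg : 0 < Real.log (1 / (1 - H * Δ)) :=
    Real.log_pos (by rw [lt_div_iff₀ hu0]; linarith)
  have factA : L * D ^ 2 * Δ < f x0 - f xstar → ∀ s : ℕ,
      (s : ℝ) < Real.log ((f x0 - f xstar) / (L * D ^ 2 * Δ)) / Real.log (1 / (1 - H * Δ)) →
      L * D ^ 2 * Δ < (1 - H * Δ) ^ s * (f x0 - f xstar) := by
    intro hc s hs
    have hDp := hDpos_of_cond hc
    have hP : 0 < L * D ^ 2 * Δ := by positivity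
    have hδp : 0 < f x0 - f xstar := hP.trans hc
    have h1 : (s : ℝ) * Real.log (1 / (1 - H * Δ)) <
        Real.log ((f x0 - f xstar) / (L * D ^ 2 * Δ)) := (lt_div_iff₀ hlg).mp hs
    rw [Real.log_div (ne_of_gt hδp) (ne_of_gt hP), one_div, Real.log_inv] at h1
    rw [← Real.log_lt_log_iff hP (by positivity),
      Real.log_mul (by positivity) (ne_of_gt hδp), Real.log_pow]
    linarith
  have factB : L * D ^ 2 * Δ < f x0 - f xstar → ∀ s : ℕ,
      Real.log ((f x0 - f xstar) / (L * D ^ 2 * Δ)) / Real.log (1 / (1 - H * Δ)) ≤ (s : ℝ) →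
      (1 - H * Δ) ^ s * (f x0 - f xstar) ≤ L * D ^ 2 * Δ := by
    intro hc s hs
    have hDp := hDpos_of_cond hc
    have hP : 0 < L * D ^ 2 * Δ := by positivity
    have hδp : 0 < f x0 - f xstar := hP.trans hc
    have h1 : Real.log ((f x0 - f xstar) / (L * D ^ 2 * Δ)) ≤
        (s : ℝ) * Real.log (1 / (1 - H * Δ)) := (div_le_iff₀ hlg).mp hs
    rw [Real.log_div (ne_of_gt hδp) (ne_of_gt hP), one_div, Real.log_inv] at h1
    rw [← Real.log_le_log_iff (by positivity) hP,
      Real.log_mul (by positivity) (ne_of_gt hδp), Real.log_pow]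
    linarith
  -- main induction
  have main : ∀ s : ℕ,
      f (x (s * t)) - f xstar ≤ f x0 - f xstar ∧
      (s ≤ sbar → f (x (s * t)) - f xstar ≤ (1 - H * Δ) ^ s * (f x0 - f xstar)) ∧
      (sbar ≤ s →
        (f (x (s * t)) - f xstar) * (H * ((s : ℝ) - (sbar : ℝ)) + 1 / Δ) ≤ L * D ^ 2) := by
    intro s
    induction s with
    | zero =>
      rw [Nat.zero_mul, hx0]
      refine ⟨le_rfl, by simp, ?_⟩
      intro hs0
      have hs0' : sbar = 0 := Nat.le_zero.mp hs0
      have hsmall : f x0 - f xstar ≤ L * D ^ 2 * Δ := by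
        by_contra hc
        push_neg at hc
        have hsb : sbar = ⌈Real.log ((f x0 - f xstar) / (L * D ^ 2 * Δ)) /
            Real.log (1 / (1 - H * Δ))⌉₊ := by rw [hsbar, if_pos hc]
        have hDp := hDpos_of_cond hc
        have hP : 0 < L * D ^ 2 * Δ := by positivity
        have hδp : 0 < f x0 - f xstar := hP.trans hc
        have hrr : 0 < Real.log ((f x0 - f xstar) / (L * D ^ 2 * Δ)) /
            Real.log (1 / (1 - H * Δ)) := by
          apply div_pos _ hlg
          exact Real.log_pos ((one_lt_div hP).mpr hc)
        have : 0 < sbar := hsb ▸ Nat.ceil_pos.mpr hrr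
        omega
      rw [hs0']
      have : H * ((0 : ℕ) - (0 : ℕ) : ℝ) + 1 / Δ = 1 / Δ := by push_cast; ring
      rw [this]
      have := mul_le_mul_of_nonneg_right hsmall (le_of_lt (by positivity : (0:ℝ) < 1 / Δ))
      calc (f x0 - f xstar) * (1 / Δ) ≤ L * D ^ 2 * Δ * (1 / Δ) := this
        _ = L * D ^ 2 := by field_simp
    | succ s ih =>
      obtain ⟨ih1, ih2, ih3⟩ := ih
      have hg1nn : 0 ≤ f (x (s * t)) - f xstar := by have := hmin (x (s * t)); linarith
      have hfle : f (x (s * t)) ≤ f x0 := by linarith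
      have hnorm : ‖x (s * t) - xstar‖ ≤ D := hD.1 ⟨x (s * t), hfle, rfl⟩
      rcases hDnn.lt_or_eq with hDpos | hDz
      · -- D > 0
        have hLD2 : 0 < L * D ^ 2 := by positivity
        by_cases hbig : L * D ^ 2 * Δ < f (x (s * t)) - f xstar
        · -- big gap: contraction by factor (1 - HΔ)
          have hg1pos : 0 < f (x (s * t)) - f xstar :=
            lt_of_le_of_lt (by positivity) hbig
          set D' := Real.sqrt ((f (x (s * t)) - f xstar) / (L * Δ)) with hD'def
          have hD'sq : D' ^ 2 = (f (x (s * t)) - f xstar) / (L * Δ) :=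
            Real.sq_sqrt (by positivity)
          have hD'pos : 0 < D' := Real.sqrt_pos.mpr (by positivity)
          have hDD' : D ≤ D' := by
            nlinarith [hD'sq, hD'pos, hDnn, (lt_div_iff₀ (by positivity : (0:ℝ) < L * Δ)).mpr
              (by nlinarith : D ^ 2 * (L * Δ) < f (x (s * t)) - f xstar)]
          have hδeq : L * D' ^ 2 * Δ = f (x (s * t)) - f xstar := by
            rw [hD'sq]; field_simp
          have hkey := key s D' (f (x (s * t)) - f xstar) hD'pos hg1nn (le_of_eq hδeq.symm)
            (hnorm.trans hDD') le_rfl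
          have hstep : f (x ((s + 1) * t)) - f xstar ≤ (1 - H * Δ) * (f (x (s * t)) - f xstar) := by
            have hcalc : (f (x (s * t)) - f xstar) - (H / (L * D' ^ 2)) *
                (f (x (s * t)) - f xstar) ^ 2 = (1 - H * Δ) * (f (x (s * t)) - f xstar) := by
              rw [hD'sq]; field_simp
            linarith [hcalc ▸ hkey]
          have hconj2 : s + 1 ≤ sbar →
              f (x ((s + 1) * t)) - f xstar ≤ (1 - H * Δ) ^ (s + 1) * (f x0 - f xstar) := by
            intro hs1
            have h2 := ih2 (le_trans (Nat.le_succ s) hs1)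
            calc f (x ((s + 1) * t)) - f xstar ≤ (1 - H * Δ) * (f (x (s * t)) - f xstar) := hstep
              _ ≤ (1 - H * Δ) * ((1 - H * Δ) ^ s * (f x0 - f xstar)) :=
                  mul_le_mul_of_nonneg_left h2 hu0.le
              _ = (1 - H * Δ) ^ (s + 1) * (f x0 - f xstar) := by ring
          refine ⟨by nlinarith [mul_nonneg hHΔpos.le hg1nn, hstep, ih1], hconj2, ?_⟩
          intro hs1
          rcases Nat.eq_or_lt_of_le hs1 with heq | hlt
          · -- sbar = s + 1
            have hcond : L * D ^ 2 * Δ < f x0 - f xstar := by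
              by_contra hc
              rw [hsbar, if_neg hc] at heq
              omega
            have hsb : sbar = ⌈Real.log ((f x0 - f xstar) / (L * D ^ 2 * Δ)) /
                Real.log (1 / (1 - H * Δ))⌉₊ := by rw [hsbar, if_pos hcond]
            have hfb := factB hcond sbar (hsb ▸ Nat.le_ceil _)
            have hgap' : f (x ((s + 1) * t)) - f xstar ≤ L * D ^ 2 * Δ := by
              have := hconj2 heq.ge
              rw [← heq] at this ⊢
              linarith
            have hgap'nn : 0 ≤ f (x ((s + 1) * t)) - f xstar := by
              have := hmin (x ((s + 1) * t)); linarith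
            have hcoef : H * (((s + 1 : ℕ) : ℝ) - (sbar : ℝ)) + 1 / Δ = 1 / Δ := by
              rw [← heq]; push_cast; ring
            rw [hcoef]
            calc (f (x ((s + 1) * t)) - f xstar) * (1 / Δ) ≤ (L * D ^ 2 * Δ) * (1 / Δ) :=
                mul_le_mul_of_nonneg_right hgap' (by positivity)
              _ = L * D ^ 2 := by field_simp
          · -- sbar ≤ s : contradiction with big gap
            exfalso
            have hss : sbar ≤ s := Nat.lt_succ_iff.mp hlt
            have h3 := ih3 hss
            have hcast : (0 : ℝ) ≤ (s : ℝ) - (sbar : ℝ) := by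
              have := (Nat.cast_le (α := ℝ)).mpr hss; linarith
            have ha1 : 1 / Δ ≤ H * ((s : ℝ) - (sbar : ℝ)) + 1 / Δ := by nlinarith
            have h4 : (f (x (s * t)) - f xstar) * (1 / Δ) ≤
                (f (x (s * t)) - f xstar) * (H * ((s : ℝ) - (sbar : ℝ)) + 1 / Δ) :=
              mul_le_mul_of_nonneg_left ha1 hg1nn
            have h5 : L * D ^ 2 < (f (x (s * t)) - f xstar) * (1 / Δ) := by
              rw [mul_one_div, lt_div_iff₀ hΔ]; linarith
            linarith
        · -- small gap
          push_neg at hbig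
          have hkeyg := key s D (f (x (s * t)) - f xstar) hDpos hg1nn hbig hnorm le_rfl
          have hcnn : 0 ≤ (H / (L * D ^ 2)) * (f (x (s * t)) - f xstar) ^ 2 := by positivity
          have hmono : f (x ((s + 1) * t)) - f xstar ≤ f (x (s * t)) - f xstar := by linarith
          refine ⟨by linarith, ?_, ?_⟩
          · intro hs1
            have hcond : L * D ^ 2 * Δ < f x0 - f xstar := by
              by_contra hc
              rw [hsbar, if_neg hc] at hs1
              omega
            have hsb : sbar = ⌈Real.log ((f x0 - f xstar) / (L * D ^ 2 * Δ)) /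
                Real.log (1 / (1 - H * Δ))⌉₊ := by rw [hsbar, if_pos hcond]
            have hslt : (s : ℝ) < Real.log ((f x0 - f xstar) / (L * D ^ 2 * Δ)) /
                Real.log (1 / (1 - H * Δ)) := Nat.lt_ceil.mp (by omega : s < ⌈_⌉₊)
            have hfa := factA hcond s hslt
            have hkeyP := key s D (L * D ^ 2 * Δ) hDpos (by positivity) le_rfl hnorm hbig
            have hcalc : (L * D ^ 2 * Δ) - (H / (L * D ^ 2)) * (L * D ^ 2 * Δ) ^ 2 =
                (1 - H * Δ) * (L * D ^ 2 * Δ) := by field_simp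
            calc f (x ((s + 1) * t)) - f xstar ≤ (1 - H * Δ) * (L * D ^ 2 * Δ) := by
                  linarith [hcalc ▸ hkeyP]
              _ ≤ (1 - H * Δ) * ((1 - H * Δ) ^ s * (f x0 - f xstar)) :=
                  mul_le_mul_of_nonneg_left hfa.le hu0.le
              _ = (1 - H * Δ) ^ (s + 1) * (f x0 - f xstar) := by ring
          · intro hs1
            rcases Nat.eq_or_lt_of_le hs1 with heq | hlt
            · -- sbar = s + 1
              have hgap' : f (x ((s + 1) * t)) - f xstar ≤ L * D ^ 2 * Δ :=
                le_trans hmono hbig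
              have hcoef : H * (((s + 1 : ℕ) : ℝ) - (sbar : ℝ)) + 1 / Δ = 1 / Δ := by
                rw [← heq]; push_cast; ring
              rw [hcoef]
              calc (f (x ((s + 1) * t)) - f xstar) * (1 / Δ) ≤ (L * D ^ 2 * Δ) * (1 / Δ) :=
                  mul_le_mul_of_nonneg_right hgap' (by positivity)
                _ = L * D ^ 2 := by field_simp
            · -- sbar ≤ s : sublinear recursion
              have hss : sbar ≤ s := Nat.lt_succ_iff.mp hlt
              have h3 := ih3 hss
              set a : ℝ := H * ((s : ℝ) - (sbar : ℝ)) + 1 / Δ with hadef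
              have hcast : (0 : ℝ) ≤ (s : ℝ) - (sbar : ℝ) := by
                have := (Nat.cast_le (α := ℝ)).mpr hss; linarith
              have ha1 : 1 / Δ ≤ a := by nlinarith
              have hapos : 0 < a := lt_of_lt_of_le (by positivity) ha1
              have hgB : f (x (s * t)) - f xstar ≤ L * D ^ 2 / a :=
                (le_div_iff₀ hapos).mpr h3
              have hBP : L * D ^ 2 / a ≤ L * D ^ 2 * Δ := by
                rw [div_le_iff₀ hapos]
                have : L * D ^ 2 * Δ * (1 / Δ) ≤ L * D ^ 2 * Δ * a :=
                  mul_le_mul_of_nonneg_left ha1 (by positivity)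
                calc L * D ^ 2 = L * D ^ 2 * Δ * (1 / Δ) := by field_simp
                  _ ≤ L * D ^ 2 * Δ * a := this
              have hBnn : 0 ≤ L * D ^ 2 / a := by positivity
              have hkeyB := key s D (L * D ^ 2 / a) hDpos hBnn hBP hnorm hgB
              have hcoef : H * (((s + 1 : ℕ) : ℝ) - (sbar : ℝ)) + 1 / Δ = a + H := by
                rw [hadef]; push_cast; ring
              rw [hcoef]
              have haH : (0 : ℝ) < a + H := by linarith
              have hgap'nn : 0 ≤ f (x ((s + 1) * t)) - f xstar := by
                have := hmin (x ((s + 1) * t)); linarith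
              have hexp : (L * D ^ 2 / a - (H / (L * D ^ 2)) * (L * D ^ 2 / a) ^ 2) * (a + H) =
                  L * D ^ 2 * ((a ^ 2 - H ^ 2) / a ^ 2) := by
                field_simp
                ring
              calc (f (x ((s + 1) * t)) - f xstar) * (a + H)
                  ≤ (L * D ^ 2 / a - (H / (L * D ^ 2)) * (L * D ^ 2 / a) ^ 2) * (a + H) :=
                    mul_le_mul_of_nonneg_right hkeyB haH.le
                _ = L * D ^ 2 * ((a ^ 2 - H ^ 2) / a ^ 2) := hexp
                _ ≤ L * D ^ 2 := by
                    have h6 : (a ^ 2 - H ^ 2) / a ^ 2 ≤ 1 := by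
                      rw [div_le_one (by positivity)]; nlinarith
                    nlinarith
          
      · -- D = 0
        have hδ0z : f x0 - f xstar = 0 := hD0gap hDz.symm
        have hg1z : f (x (s * t)) - f xstar ≤ 0 := by linarith
        have hkey := key s 1 0 one_pos le_rfl (by positivity) (by rw [← hDz] at hnorm; linarith)
          hg1z
        have hgap' : f (x ((s + 1) * t)) - f xstar ≤ 0 := by
          have : (0 : ℝ) - H / (L * 1 ^ 2) * 0 ^ 2 = 0 := by ring
          linarith [this ▸ hkey]
        refine ⟨by linarith, ?_, ?_⟩
        · intro _
          have : (1 - H * Δ) ^ (s + 1) * (f x0 - f xstar) = 0 := by rw [hδ0z]; ring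
          linarith
        · intro hs1
          have hcast : (0 : ℝ) ≤ ((s + 1 : ℕ) : ℝ) - (sbar : ℝ) := by
            have := (Nat.cast_le (α := ℝ)).mpr hs1; push_cast at this ⊢; linarith
          have hanneg : 0 ≤ H * (((s + 1 : ℕ) : ℝ) - (sbar : ℝ)) + 1 / Δ := by positivity
          have : (f (x ((s + 1) * t)) - f xstar) *
              (H * (((s + 1 : ℕ) : ℝ) - (sbar : ℝ)) + 1 / Δ) ≤ 0 :=
            mul_nonpos_of_nonpos_of_nonneg hgap' hanneg
          rw [← hDz]
          nlinarith
  intro s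
  refine ⟨fun hs => (main s).2.1 hs, fun hs => ?_⟩
  have h3 := (main s).2.2 hs.le
  have hcast : (0 : ℝ) ≤ (s : ℝ) - (sbar : ℝ) := by
    have := (Nat.cast_le (α := ℝ)).mpr hs.le; linarith
  have hapos : 0 < H * ((s : ℝ) - (sbar : ℝ)) + 1 / Δ := by positivity
  exact (le_div_iff₀ hapos).mpr h3


end
end

section
/- Let t ≥ 1 and let h = (h_0,…,h_{t−1}) ∈ ℝ^t be ε-straightforward with parameter Δ ∈ (0,1/2] for some ε ≥ 0, and set H := Σ_{i=0}^{t−1}(h_i − ε). Let f : ℝ^n → ℝ be convex and L-smooth with a minimizer x_⋆, let x_0 ∈ ℝ^n, assume D := sup{‖x − x_⋆‖₂ : f(x) ≤ f(x_0)} is finite, run gradient descent with pattern h from x_0, and write δ_k := f(x_k) − f(x_⋆). Then for every s ∈ ℕ: if δ_{st} ≤ LD²Δ then δ_{(s+1)t} ≤ δ_{st} − (H/(LD²))·δ_{st}², and if δ_{st} > LD²Δ then δ_{(s+1)t} ≤ (1 − H·Δ)·δ_{st}. -/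
open scoped BigOperators

noncomputable section

/-- One-cycle descent recurrence (Theorem 3.1's recurrence \eqref{eq:straightforward-recurrence}):
with `δ_k := f (x k) - f xstar` and `H := Σ_{i<t}(h i - ε)`, each application of an
`ε`-straightforward pattern `h` satisfies the stated two-case decrease. -/
theorem straightforward_cycle_recurrence {n : ℕ} (t : ℕ) (ht : 1 ≤ t) (h : ℕ → ℝ)
    (ε Δ : ℝ) (hε : 0 ≤ ε) (hΔ : 0 < Δ) (hΔhalf : Δ ≤ 1 / 2)
    (hsf : IsStraightforward t h ε Δ)
    (H : ℝ) (hH : H = ∑ i ∈ Finset.range t, (h i - ε))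
    (L : ℝ) (hL : 0 < L)
    (f : E n → ℝ) (hconv : ConvexOn ℝ Set.univ f) (hsmooth : IsLSmooth L f)
    (xstar : E n) (hmin : ∀ z, f xstar ≤ f z)
    (x : ℕ → E n) (x0 : E n) (hx0 : x 0 = x0)
    (D : ℝ) (hD : IsLUB {r : ℝ | ∃ z : E n, f z ≤ f x0 ∧ r = ‖z - xstar‖} D)
    (hrec : ∀ k : ℕ, x (k + 1) = x k - (h (k % t) / L) • gradient f (x k)) :
    ∀ s : ℕ,
      (f (x (s * t)) - f xstar ≤ L * D ^ 2 * Δ →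
        f (x ((s + 1) * t)) - f xstar ≤
          (f (x (s * t)) - f xstar) - (H / (L * D ^ 2)) * (f (x (s * t)) - f xstar) ^ 2) ∧
      (L * D ^ 2 * Δ < f (x (s * t)) - f xstar →
        f (x ((s + 1) * t)) - f xstar ≤ (1 - H * Δ) * (f (x (s * t)) - f xstar)) := by
  have hδnn : ∀ k : ℕ, 0 ≤ f (x k) - f xstar := fun k => sub_nonneg.2 (hmin _)
  have hDnn : 0 ≤ D := by
    have := hD.1 (show (0:ℝ) ∈ _ from ⟨xstar, hmin x0, by simp⟩)
    linarith
  -- key: one application of the straightforward property with radius `D'`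
  have key : ∀ (s : ℕ) (D' : ℝ), 0 < D' → ‖x (s * t) - xstar‖ ≤ D' →
      f (x (s * t)) - f xstar ≤ L * D' ^ 2 * Δ →
      f (x ((s + 1) * t)) - f xstar ≤ (f (x (s * t)) - f xstar)
        - ((∑ i ∈ Finset.range t, (h i - ε)) / (L * D' ^ 2)) * (f (x (s * t)) - f xstar) ^ 2 := by
    intro s D' hD'pos hdist hδle
    have hmain := hsf n L D' (f (x (s * t)) - f xstar) hL hD'pos (hδnn _) hδle
      f hconv hsmooth xstar hmin (fun k => x (s * t + k)) (by simpa using hdist) (by simp)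
      (fun k hk => by
        have h1 : (s * t + k) % t = k := by
          rw [mul_comm s t, Nat.mul_add_mod]; exact Nat.mod_eq_of_lt hk
        have h2 := hrec (s * t + k)
        rw [h1] at h2
        simpa [add_assoc] using h2)
    have ht' : (s + 1) * t = s * t + t := by ring
    simpa [ht'] using hmain
  -- per-cycle monotonicity (take D' → ∞)
  have mono : ∀ s : ℕ, f (x (s * t)) ≤ f x0 := by
    intro s
    induction s with
    | zero => simp [hx0]
    | succ s ih =>
      have hdist : ‖x (s * t) - xstar‖ ≤ D := hD.1 ⟨x (s * t), ih, rfl⟩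
      set δ := f (x (s * t)) - f xstar with hδdef
      have hδ0 : 0 ≤ δ := hδnn _
      set H' := ∑ i ∈ Finset.range t, (h i - ε) with hH'
      have hgoal : f (x ((s + 1) * t)) - f xstar ≤ δ := by
        refine le_of_forall_pos_le_add ?_
        intro η hη
        set D' := max (max 1 D) (max (Real.sqrt (δ / (L * Δ))) (Real.sqrt (|H'| * δ ^ 2 / (L * η)))) with hD'def
        have hD'1 : (1:ℝ) ≤ D' := le_max_of_le_left (le_max_left _ _)
        have hD'pos : (0:ℝ) < D' := lt_of_lt_of_le one_pos hD'1
        have hD'D : D ≤ D' := le_max_of_le_left (le_max_right _ _)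
        have h1 : δ ≤ L * D' ^ 2 * Δ := by
          have hs : Real.sqrt (δ / (L * Δ)) ≤ D' := le_max_of_le_right (le_max_left _ _)
          have h2 : δ / (L * Δ) ≤ D' ^ 2 := by
            calc δ / (L * Δ) = Real.sqrt (δ / (L * Δ)) ^ 2 :=
                  (Real.sq_sqrt (div_nonneg hδ0 (by positivity))).symm
              _ ≤ D' ^ 2 := by gcongr
          calc δ = (δ / (L * Δ)) * (L * Δ) := by field_simp
            _ ≤ D' ^ 2 * (L * Δ) := by
                exact mul_le_mul_of_nonneg_right h2 (by positivity)
            _ = L * D' ^ 2 * Δ := by ring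
        have hkey := key s D' hD'pos (hdist.trans hD'D) h1
        have hC : |H'| * δ ^ 2 / (L * D' ^ 2) ≤ η := by
          have hs : Real.sqrt (|H'| * δ ^ 2 / (L * η)) ≤ D' := le_max_of_le_right (le_max_right _ _)
          have h2 : |H'| * δ ^ 2 / (L * η) ≤ D' ^ 2 := by
            calc |H'| * δ ^ 2 / (L * η) = Real.sqrt (|H'| * δ ^ 2 / (L * η)) ^ 2 :=
                  (Real.sq_sqrt (by positivity)).symm
              _ ≤ D' ^ 2 := by gcongr
          rw [div_le_iff₀ (by positivity)]
          rw [div_le_iff₀ (by positivity)] at h2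
          nlinarith [hη, hL]
        have hB : -((H' / (L * D' ^ 2)) * δ ^ 2) ≤ |H'| * δ ^ 2 / (L * D' ^ 2) := by
          have habs : -(H' / (L * D' ^ 2)) ≤ |H'| / (L * D' ^ 2) := by
            rw [← neg_div]
            exact (div_le_div_iff_of_pos_right (by positivity)).2 (neg_le_abs H')
          calc -((H' / (L * D' ^ 2)) * δ ^ 2) = (-(H' / (L * D' ^ 2))) * δ ^ 2 := by ring
            _ ≤ (|H'| / (L * D' ^ 2)) * δ ^ 2 := mul_le_mul_of_nonneg_right habs (sq_nonneg _)
            _ = |H'| * δ ^ 2 / (L * D' ^ 2) := by ring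
        linarith
      have := hmin (x (s * t))
      linarith
  intro s
  have hdist : ‖x (s * t) - xstar‖ ≤ D := hD.1 ⟨x (s * t), mono s, rfl⟩
  constructor
  · -- case 1
    intro hle
    rcases eq_or_lt_of_le hDnn with hD0 | hDpos
    · -- degenerate case D = 0 : all iterates equal xstar
      have hx0star : x 0 = xstar := by
        have h1 : ‖x0 - xstar‖ ≤ D := hD.1 ⟨x0, le_refl _, rfl⟩
        rw [← hD0] at h1
        have h2 : x0 - xstar = 0 := by
          have := norm_nonneg (x0 - xstar)
          have h3 : ‖x0 - xstar‖ = 0 := le_antisymm h1 this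
          exact norm_eq_zero.1 h3
        rw [hx0]
        exact sub_eq_zero.1 h2
      have hgrad : gradient f xstar = 0 := by
        have h1 : IsLocalMin f xstar := Filter.Eventually.of_forall hmin
        rw [gradient, h1.fderiv_eq_zero, map_zero]
      have hall : ∀ k : ℕ, x k = xstar := by
        intro k
        induction k with
        | zero => exact hx0star
        | succ k ih => rw [hrec k, ih, hgrad, smul_zero, sub_zero]
      rw [hall, hall]
      simp
    · have hkey := key s D hDpos hdist hle
      rw [hH]
      exact hkey
  · -- case 2
    intro hgt
    set δ := f (x (s * t)) - f xstar with hδdef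
    have hδpos : 0 < δ := lt_of_le_of_lt (by positivity) hgt
    set D' := Real.sqrt (δ / (L * Δ)) with hD'def
    have hq : 0 < δ / (L * Δ) := by positivity
    have hD'pos : 0 < D' := Real.sqrt_pos.2 hq
    have hD'sq : D' ^ 2 = δ / (L * Δ) := Real.sq_sqrt hq.le
    have hLD' : L * D' ^ 2 = δ / Δ := by
      rw [hD'sq]; field_simp
    have hDleD' : D ≤ D' := by
      have h1 : D ^ 2 ≤ D' ^ 2 := by
        rw [hD'sq, le_div_iff₀ (by positivity)]
        nlinarith [hgt]
      calc D = Real.sqrt (D ^ 2) := (Real.sqrt_sq hDnn).symm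
        _ ≤ Real.sqrt (D' ^ 2) := Real.sqrt_le_sqrt h1
        _ = D' := Real.sqrt_sq hD'pos.le
    have hδle : δ ≤ L * D' ^ 2 * Δ := by
      rw [hLD']
      exact (div_mul_cancel₀ δ hΔ.ne').ge
    have hkey := key s D' hD'pos (hdist.trans hDleD') hδle
    rw [← hH] at hkey
    have halg : δ - H / (L * D' ^ 2) * δ ^ 2 = (1 - H * Δ) * δ := by
      rw [hLD']
      field_simp
    rw [halg] at hkey
    exact hkey

end
end

section
/- Fix t ≥ 1, h ∈ ℝ^t, and L > 0, and use the PEP notation (with factor 1/L in the 𝐱 vectors). Suppose there exist real numbers λ_{i,j} ≥ 0 (for i ≠ j in I_t^⋆), v ≥ 0, and w ≥ 0 such that Σ_{i≠j} λ_{i,j}·a_{i,j} = a_{⋆,t} − w·a_{⋆,0} in ℝ^{t+1}, and the symmetric matrix Z := v·B_{0,⋆} + Σ_{i≠j} λ_{i,j}·(A_{i,j} + (1/(2L))·C_{i,j}) is positive semidefinite. Then for every n, every convex L-smooth f : ℝ^n → ℝ with a minimizer x_⋆, every x_0 ∈ ℝ^n, and the iterates x_{k+1} = x_k − (h_k/L)·∇f(x_k)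 for k = 0,…,t−1, one has f(x_t) − f(x_⋆) ≤ v·‖x_0 − x_⋆‖₂² + w·(f(x_0) − f(x_⋆)). -/
open scoped BigOperators

noncomputable section

/-- The PEP index set `I_t^⋆ = {⋆, 0, 1, …, t}`: `none` is `⋆`, `some i` is iterate `i`. -/
abbrev Idx (t : ℕ) : Type := Option (Fin (t + 1))

/-- Standard basis vector of `ℝ^{t+2}` (0-indexed position `k`). -/
def evec (t k : ℕ) : Fin (t + 2) → ℝ := fun j => if (j : ℕ) = k then 1 else 0

/-- `𝐠_⋆ = 0` and `𝐠_i = e_{i+2}` (1-indexed), i.e. 0-indexed position `i+1`. -/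
def gvec (t : ℕ) : Idx t → Fin (t + 2) → ℝ
  | none => 0
  | some i => evec t ((i : ℕ) + 1)

/-- `𝐱_⋆ = 0`, `𝐱_0 = e_1`, `𝐱_i = 𝐱_0 - (1/L) Σ_{j<i} h_j 𝐠_j`. -/
def xvec (t : ℕ) (h : ℕ → ℝ) (L : ℝ) : Idx t → Fin (t + 2) → ℝ
  | none => 0
  | some i => evec t 0 - L⁻¹ • ∑ j ∈ Finset.range (i : ℕ), h j • evec t (j + 1)

/-- `𝐟_⋆ = 0` and `𝐟_i = e_{i+1}` (1-indexed), i.e. 0-indexed position `i`. -/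
def fvec (t : ℕ) : Idx t → Fin (t + 1) → ℝ
  | none => 0
  | some i => fun j => if j = i then 1 else 0

/-- `a_{i,j} := 𝐟_j - 𝐟_i ∈ ℝ^{t+1}`. -/
def avec (t : ℕ) (i j : Idx t) : Fin (t + 1) → ℝ := fvec t j - fvec t i

/-- Symmetric outer product `x ⊙ y = (x yᵀ + y xᵀ)/2`. -/
def sop {m : ℕ} (x y : Fin m → ℝ) : Matrix (Fin m) (Fin m) ℝ :=
  Matrix.of fun a b => (x a * y b + y a * x b) / 2

/-- `A_{i,j} := 𝐠_j ⊙ (𝐱_i - 𝐱_j)`. -/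
def Amat (t : ℕ) (h : ℕ → ℝ) (L : ℝ) (i j : Idx t) : Matrix (Fin (t + 2)) (Fin (t + 2)) ℝ :=
  sop (gvec t j) (xvec t h L i - xvec t h L j)

/-- `B_{i,j} := (𝐱_i - 𝐱_j) ⊙ (𝐱_i - 𝐱_j)`. -/
def Bmat (t : ℕ) (h : ℕ → ℝ) (L : ℝ) (i j : Idx t) : Matrix (Fin (t + 2)) (Fin (t + 2)) ℝ :=
  sop (xvec t h L i - xvec t h L j) (xvec t h L i - xvec t h L j)

/-- `C_{i,j} := (𝐠_i - 𝐠_j) ⊙ (𝐠_i - 𝐠_j)`. -/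
def Cmat (t : ℕ) (i j : Idx t) : Matrix (Fin (t + 2)) (Fin (t + 2)) ℝ :=
  sop (gvec t i - gvec t j) (gvec t i - gvec t j)

/-! ### Auxiliary analysis lemmas -/

open RealInnerProductSpace

section Analysis

variable {n : ℕ} {L : ℝ} {f : E n → ℝ}

lemma inner_gradient_eq (f : E n → ℝ) (p v : E n) :
    ⟪gradient f p, v⟫ = fderiv ℝ f p v :=
  InnerProductSpace.toDual_symm_apply

lemma curve_hasDerivAt (hd : Differentiable ℝ f) (a b : E n) (s : ℝ) :
    HasDerivAt (fun s : ℝ => f (a + s • (b - a)))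
      ⟪gradient f (a + s • (b - a)), b - a⟫ s := by
  have hγ : HasDerivAt (fun s : ℝ => a + s • (b - a)) (b - a) s := by
    simpa using ((hasDerivAt_id s).smul_const (b - a)).const_add a
  have hf := (hd (a + s • (b - a))).hasFDerivAt
  have H := hf.comp_hasDerivAt s hγ
  rw [inner_gradient_eq]
  exact H

lemma grad_convex_ineq (hc : ConvexOn ℝ Set.univ f) (hd : Differentiable ℝ f) (a b : E n) :
    f a + ⟪gradient f a, b - a⟫ ≤ f b := by
  have e : (fun s : ℝ => f (a + s • (b - a)))
      = (f ∘ (AffineMap.lineMap a b : ℝ →ᵃ[ℝ] E n)) := by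
    funext s
    simp [AffineMap.lineMap_apply, add_comm, vsub_eq_sub]
  have hg : ConvexOn ℝ Set.univ (fun s : ℝ => f (a + s • (b - a))) := by
    rw [e]
    simpa using hc.comp_affineMap (AffineMap.lineMap a b : ℝ →ᵃ[ℝ] E n)
  have hder := curve_hasDerivAt hd a b 0
  rw [show a + (0:ℝ) • (b - a) = a by simp] at hder
  have hs := hg.le_slope_of_hasDerivAt (Set.mem_univ (0:ℝ)) (Set.mem_univ 1) zero_lt_one hder
  simp only [slope_def_field] at hs
  rw [show a + (1:ℝ) • (b - a) = b by simp, show a + (0:ℝ) • (b - a) = a by simp] at hs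
  have : (f b - f a) / (1 - 0) = f b - f a := by norm_num
  rw [this] at hs
  linarith

lemma descent_lemma (hd : Differentiable ℝ f) (hL : 0 < L)
    (hLip : ∀ x y : E n, ‖gradient f x - gradient f y‖ ≤ L * ‖x - y‖) (a b : E n) :
    f b ≤ f a + ⟪gradient f a, b - a⟫ + L / 2 * ‖b - a‖ ^ 2 := by
  set g' : ℝ → ℝ := fun s => ⟪gradient f (a + s • (b - a)), b - a⟫ with hg'
  have hgradcont : Continuous (gradient f) := by
    have : LipschitzWith (Real.toNNReal L) (gradient f) := by
      apply LipschitzWith.of_dist_le_mul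
      intro x y
      simpa [dist_eq_norm, Real.coe_toNNReal L hL.le] using hLip x y
    exact this.continuous
  have hcont : Continuous g' := by
    apply Continuous.inner
    · exact hgradcont.comp (by continuity)
    · exact continuous_const
  have key : f (a + (1:ℝ) • (b - a)) - f (a + (0:ℝ) • (b - a)) = ∫ s in (0:ℝ)..1, g' s :=
    (intervalIntegral.integral_eq_sub_of_hasDerivAt
      (fun s _ => curve_hasDerivAt hd a b s) (hcont.intervalIntegrable 0 1)).symm
  have hsub : ∫ s in (0:ℝ)..1, (g' s - g' 0)
      = (f (a + (1:ℝ) • (b - a)) - f (a + (0:ℝ) • (b - a))) - g' 0 := by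
    rw [intervalIntegral.integral_sub (hcont.intervalIntegrable _ _) intervalIntegrable_const,
      ← key]
    simp
  have hbound : ∫ s in (0:ℝ)..1, (g' s - g' 0) ≤ ∫ s in (0:ℝ)..1, (L * ‖b - a‖ ^ 2 * s) := by
    apply intervalIntegral.integral_mono_on zero_le_one
    · exact (hcont.sub continuous_const).intervalIntegrable 0 1
    · exact (Continuous.intervalIntegrable (by continuity) 0 1)
    · intro s hs
      have h0 : a + (0:ℝ) • (b - a) = a := by simp
      have he : g' s - g' 0 = ⟪gradient f (a + s • (b - a)) - gradient f a, b - a⟫ := by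
        rw [hg']; simp only [h0]
        rw [inner_sub_left]
      rw [he]
      calc ⟪gradient f (a + s • (b - a)) - gradient f a, b - a⟫
          ≤ ‖gradient f (a + s • (b - a)) - gradient f a‖ * ‖b - a‖ := real_inner_le_norm _ _
        _ ≤ (L * ‖a + s • (b - a) - a‖) * ‖b - a‖ :=
            mul_le_mul_of_nonneg_right (hLip _ _) (norm_nonneg _)
        _ = L * ‖b - a‖ ^ 2 * s := by
            have : a + s • (b - a) - a = s • (b - a) := by abel
            rw [this, norm_smul, Real.norm_eq_abs, abs_of_nonneg hs.1]
            ring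
  have hval : ∫ s in (0:ℝ)..1, (L * ‖b - a‖ ^ 2 * s) = L / 2 * ‖b - a‖ ^ 2 := by
    rw [intervalIntegral.integral_const_mul, integral_id]
    ring
  have hg'0 : g' 0 = ⟪gradient f a, b - a⟫ := by
    rw [hg']; simp only [show a + (0:ℝ) • (b - a) = a by simp]
  rw [show a + (1:ℝ) • (b - a) = b by simp, show a + (0:ℝ) • (b - a) = a by simp] at hsub
  rw [hval] at hbound
  rw [hsub, hg'0] at hbound
  linarith

/-- Smooth-convex interpolation inequality. -/
lemma interp_ineq (hc : ConvexOn ℝ Set.univ f) (hd : Differentiable ℝ f) (hL : 0 < L)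
    (hLip : ∀ x y : E n, ‖gradient f x - gradient f y‖ ≤ L * ‖x - y‖) (x y : E n) :
    f y + ⟪gradient f y, x - y⟫ + (2 * L)⁻¹ * ‖gradient f x - gradient f y‖ ^ 2 ≤ f x := by
  set d : E n := gradient f x - gradient f y with hd'
  set x' : E n := x - L⁻¹ • d with hx'
  have h1 := grad_convex_ineq hc hd y x'
  have h2 := descent_lemma hd hL hLip x x'
  have e1 : x' - y = (x - y) - L⁻¹ • d := by rw [hx']; abel
  have e2 : x' - x = -(L⁻¹ • d) := by rw [hx']; abel
  have i1 : ⟪gradient f y, x' - y⟫ = ⟪gradient f y, x - y⟫ - L⁻¹ * ⟪gradient f y, d⟫ := by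
    rw [e1, inner_sub_right, real_inner_smul_right]
  have i2 : ⟪gradient f x, x' - x⟫ = -(L⁻¹ * ⟪gradient f x, d⟫) := by
    rw [e2, inner_neg_right, real_inner_smul_right]
  have i3 : ‖x' - x‖ ^ 2 = L⁻¹ ^ 2 * ‖d‖ ^ 2 := by
    rw [e2, norm_neg, norm_smul, Real.norm_eq_abs, mul_pow, sq_abs]
  have i4 : ⟪gradient f x, d⟫ - ⟪gradient f y, d⟫ = ‖d‖ ^ 2 := by
    rw [← inner_sub_left, ← hd', real_inner_self_eq_norm_sq]
  rw [i1] at h1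
  rw [i2, i3] at h2
  have e5 : L / 2 * (L⁻¹ ^ 2 * ‖d‖ ^ 2) = (2 * L)⁻¹ * ‖d‖ ^ 2 := by
    field_simp
  rw [e5] at h2
  have key : L⁻¹ * ⟪gradient f x, d⟫ - L⁻¹ * ⟪gradient f y, d⟫ = L⁻¹ * ‖d‖ ^ 2 := by
    rw [← mul_sub, i4]
  have hinv : L⁻¹ * ‖d‖ ^ 2 - (2 * L)⁻¹ * ‖d‖ ^ 2 = (2 * L)⁻¹ * ‖d‖ ^ 2 := by
    field_simp; ring
  linarith

lemma gradient_min_eq_zero (xstar : E n)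
    (hmin : ∀ z, f xstar ≤ f z) : gradient f xstar = 0 := by
  have hloc : IsLocalMin f xstar := Filter.Eventually.of_forall hmin
  have h0 : fderiv ℝ f xstar = 0 := hloc.fderiv_eq_zero
  rw [gradient, h0, map_zero]

end Analysis

/-! ### Linear-algebra machinery -/

/-- `Φ c = ∑ a, c a • P a` as a linear map. -/
def plinf {m n : ℕ} (P : Fin m → E n) : (Fin m → ℝ) →ₗ[ℝ] E n where
  toFun c := ∑ a, c a • P a
  map_add' c d := by simp [add_smul, Finset.sum_add_distrib]
  map_smul' r c := by simp [smul_smul, Finset.smul_sum]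

@[simp] lemma plinf_apply {m n : ℕ} (P : Fin m → E n) (c : Fin m → ℝ) :
    plinf P c = ∑ a, c a • P a := rfl

/-- `Q M = ∑ a b, M a b ⟪P a, P b⟫` as a linear map. -/
def qlinf {m n : ℕ} (P : Fin m → E n) : Matrix (Fin m) (Fin m) ℝ →ₗ[ℝ] ℝ where
  toFun M := ∑ a, ∑ b, M a b * ⟪P a, P b⟫
  map_add' M N := by simp [add_mul, Finset.sum_add_distrib]
  map_smul' r M := by simp [Finset.mul_sum, mul_assoc]

@[simp] lemma qlinf_apply {m n : ℕ} (P : Fin m → E n) (M : Matrix (Fin m) (Fin m) ℝ) :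
    qlinf P M = ∑ a, ∑ b, M a b * ⟪P a, P b⟫ := rfl

/-- Pairing of values against a vector, as a linear map. -/
def vlinf {m : ℕ} (F : Fin m → ℝ) : (Fin m → ℝ) →ₗ[ℝ] ℝ where
  toFun c := ∑ k, c k * F k
  map_add' c d := by simp [add_mul, Finset.sum_add_distrib]
  map_smul' r c := by simp [Finset.mul_sum, mul_assoc]

@[simp] lemma vlinf_apply {m : ℕ} (F : Fin m → ℝ) (c : Fin m → ℝ) :
    vlinf F c = ∑ k, c k * F k := rfl

lemma inner_plinf {m n : ℕ} (P : Fin m → E n) (c d : Fin m → ℝ) :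
    ⟪plinf P c, plinf P d⟫ = ∑ a, ∑ b, (c a * d b) * ⟪P a, P b⟫ := by
  rw [plinf_apply, plinf_apply, sum_inner]
  refine Finset.sum_congr rfl fun a _ => ?_
  rw [real_inner_smul_left, inner_sum, Finset.mul_sum]
  refine Finset.sum_congr rfl fun b _ => ?_
  rw [real_inner_smul_right]; ring

lemma qlinf_sop {m n : ℕ} (P : Fin m → E n) (c d : Fin m → ℝ) :
    qlinf P (sop c d) = ⟪plinf P c, plinf P d⟫ := by
  have h1 := inner_plinf P c d
  have h2 : ⟪plinf P c, plinf P d⟫ = ∑ a, ∑ b, (d a * c b) * ⟪P a, P b⟫ := by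
    rw [real_inner_comm]; exact inner_plinf P d c
  have key : qlinf P (sop c d)
      = (∑ a, ∑ b, (c a * d b) * ⟪P a, P b⟫) / 2
        + (∑ a, ∑ b, (d a * c b) * ⟪P a, P b⟫) / 2 := by
    rw [qlinf_apply, Finset.sum_div, Finset.sum_div, ← Finset.sum_add_distrib]
    refine Finset.sum_congr rfl fun a _ => ?_
    rw [Finset.sum_div, Finset.sum_div, ← Finset.sum_add_distrib]
    refine Finset.sum_congr rfl fun b _ => ?_
    simp only [sop, Matrix.of_apply]
    ring
  rw [key, ← h1, ← h2]; ring

lemma qlinf_nonneg {m n : ℕ} (P : Fin m → E n) {M : Matrix (Fin m) (Fin m) ℝ}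
    (hM : M.PosSemidef) : 0 ≤ qlinf P M := by
  have expand : qlinf P M
      = ∑ k : Fin n, ∑ a, ∑ b, P a k * (M a b * P b k) := by
    rw [qlinf_apply]
    simp only [PiLp.inner_apply, RCLike.inner_apply, conj_trivial]
    calc ∑ a, ∑ b, M a b * ∑ k, P b k * P a k
        = ∑ a, ∑ b, ∑ k, M a b * (P a k * P b k) := by
          refine Finset.sum_congr rfl fun a _ => Finset.sum_congr rfl fun b _ => ?_
          rw [Finset.mul_sum]; exact Finset.sum_congr rfl fun k _ => by ring
      _ = ∑ a, ∑ k, ∑ b, M a b * (P a k * P b k) :=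
          Finset.sum_congr rfl fun a _ => Finset.sum_comm
      _ = ∑ k, ∑ a, ∑ b, M a b * (P a k * P b k) := Finset.sum_comm
      _ = ∑ k, ∑ a, ∑ b, P a k * (M a b * P b k) := by
          refine Finset.sum_congr rfl fun k _ => Finset.sum_congr rfl fun a _ =>
            Finset.sum_congr rfl fun b _ => by ring
  rw [expand]
  refine Finset.sum_nonneg fun k _ => ?_
  have := hM.dotProduct_mulVec_nonneg (fun a => P a k)
  simpa [dotProduct, Matrix.mulVec, Finset.mul_sum] using this

/-- Evaluating `Φ` on a standard basis vector gives the corresponding point. -/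
lemma plinf_evec {t n : ℕ} (P : Fin (t + 2) → E n) (k : Fin (t + 2)) :
    plinf P (evec t (k : ℕ)) = P k := by
  rw [plinf_apply]
  have he : ∀ a : Fin (t + 2), evec t (k : ℕ) a • P a = if a = k then P a else 0 := by
    intro a
    simp only [evec, Fin.val_eq_val]
    split_ifs <;> simp
  simp only [he]
  simp

/-- Soundness of a feasible point of the dual performance-estimation SDP. -/
theorem dual_PEP_soundness (t : ℕ) (ht : 1 ≤ t) (h : ℕ → ℝ) (L : ℝ) (hL : 0 < L)
    (lam : Idx t → Idx t → ℝ) (v w : ℝ)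
    (hlam : ∀ i j : Idx t, i ≠ j → 0 ≤ lam i j) (hv : 0 ≤ v) (hw : 0 ≤ w)
    (heq : (∑ i : Idx t, ∑ j : Idx t, if i = j then 0 else lam i j • avec t i j)
      = avec t none (some (Fin.last t)) - w • avec t none (some 0))
    (hZ : (v • Bmat t h L (some 0) none
        + ∑ i : Idx t, ∑ j : Idx t,
            if i = j then 0 else lam i j • (Amat t h L i j + (2 * L)⁻¹ • Cmat t i j)).PosSemidef) :
    ∀ (n : ℕ) (f : E n → ℝ), ConvexOn ℝ Set.univ f → IsLSmooth L f →
      ∀ xstar : E n, (∀ z, f xstar ≤ f z) →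
        ∀ x : ℕ → E n,
          (∀ k < t, x (k + 1) = x k - (h k / L) • gradient f (x k)) →
          f (x t) - f xstar ≤ v * ‖x 0 - xstar‖ ^ 2 + w * (f (x 0) - f xstar) := by
  intro n f hc hsm xstar hmin x hx
  obtain ⟨hd, hLip⟩ := hsm
  have hg0 : gradient f xstar = 0 := gradient_min_eq_zero xstar hmin
  -- the actual points, gradients and values
  set p : Idx t → E n := fun i => Option.elim i xstar (fun k => x k) with hp
  set P : Fin (t + 2) → E n :=
    Fin.cases (x 0 - xstar) (fun i : Fin (t + 1) => gradient f (x i)) with hP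
  set F : Fin (t + 1) → ℝ := fun k => f (x k) - f xstar with hF
  set Gr : Idx t → E n := fun i => gradient f (p i) with hGr
  set X : Idx t → E n := fun i => p i - xstar with hX
  set Fe : Idx t → ℝ := fun i => f (p i) - f xstar with hFe
  have hpnone : p none = xstar := rfl
  have hpsome : ∀ k : Fin (t + 1), p (some k) = x k := fun _ => rfl
  -- iteration formula
  have hiter : ∀ i : ℕ, i ≤ t →
      x i = x 0 - L⁻¹ • ∑ j ∈ Finset.range i, h j • gradient f (x j) := by
    intro i
    induction i with
    | zero => intro _; simp
    | succ k ih =>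
      intro hk
      have hkt : k < t := by omega
      have ihk := ih (by omega)
      rw [hx k hkt, Finset.sum_range_succ, smul_add, smul_smul, ihk]
      have : h k / L = L⁻¹ * h k := by rw [div_eq_mul_inv, mul_comm]
      rw [this]
      abel
  -- evaluation of `Φ` on the symbolic vectors
  have hGv : ∀ i : Idx t, plinf P (gvec t i) = Gr i := by
    intro i
    match i with
    | none =>
      show plinf P (0 : Fin (t + 2) → ℝ) = Gr none
      rw [map_zero, hGr]
      simp only [hpnone, hg0]
    | some i =>
      show plinf P (evec t ((i : ℕ) + 1)) = Gr (some i)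
      have : ((i : ℕ) + 1) = ((Fin.succ i : Fin (t + 2)) : ℕ) := by simp [Fin.val_succ]
      rw [this, plinf_evec, hP]
      simp [hGr, hpsome]
  have hXv : ∀ i : Idx t, plinf P (xvec t h L i) = X i := by
    intro i
    match i with
    | none =>
      show plinf P (0 : Fin (t + 2) → ℝ) = X none
      rw [map_zero, hX]
      simp [hpnone]
    | some i =>
      show plinf P (evec t 0 - L⁻¹ • ∑ j ∈ Finset.range (i : ℕ), h j • evec t (j + 1)) = X (some i)
      rw [map_sub, map_smul, map_sum]
      have h0 : plinf P (evec t 0) = x 0 - xstar := by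
        have : (0 : ℕ) = ((0 : Fin (t + 2)) : ℕ) := by simp
        rw [this, plinf_evec, hP]
        simp
      have hsumeq : ∀ j ∈ Finset.range (i : ℕ),
          plinf P (h j • evec t (j + 1)) = h j • gradient f (x j) := by
        intro j hj
        have hjt : j < t + 1 := by
          have := Finset.mem_range.mp hj
          have := i.isLt
          omega
        rw [map_smul]
        have : (j + 1) = ((Fin.succ (⟨j, hjt⟩ : Fin (t + 1)) : Fin (t + 2)) : ℕ) := by
          simp [Fin.val_succ]
        rw [this, plinf_evec, hP]
        simp
      rw [Finset.sum_congr rfl hsumeq, h0]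
      rw [hX]
      simp only [hpsome]
      rw [hiter (i : ℕ) (by omega)]
      abel
  -- evaluation of the value pairing
  have hFv : ∀ i : Idx t, vlinf F (fvec t i) = Fe i := by
    intro i
    match i with
    | none =>
      show vlinf F (0 : Fin (t + 1) → ℝ) = Fe none
      rw [map_zero, hFe]
      simp [hpnone]
    | some i =>
      show vlinf F (fun j => if j = i then 1 else 0) = Fe (some i)
      rw [vlinf_apply]
      rw [Finset.sum_eq_single i (by intro b _ hb; simp [hb]) (by simp)]
      simp [hF, hFe, hpsome]
  have hav : ∀ i j : Idx t, vlinf F (avec t i j) = Fe j - Fe i := by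
    intro i j
    show vlinf F (fvec t j - fvec t i) = _
    rw [map_sub, hFv, hFv]
  -- evaluations of the matrices
  have hA : ∀ i j : Idx t, qlinf P (Amat t h L i j) = ⟪Gr j, X i - X j⟫ := by
    intro i j
    rw [Amat, qlinf_sop, map_sub, hGv, hXv, hXv]
  have hC : ∀ i j : Idx t, qlinf P (Cmat t i j) = ‖Gr i - Gr j‖ ^ 2 := by
    intro i j
    rw [Cmat, qlinf_sop, map_sub, hGv, hGv, real_inner_self_eq_norm_sq]
  have hB : qlinf P (Bmat t h L (some 0) none) = ‖x 0 - xstar‖ ^ 2 := by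
    rw [Bmat, qlinf_sop, map_sub, hXv, hXv, real_inner_self_eq_norm_sq]
    have : X (some 0) - X none = x 0 - xstar := by
      rw [hX]
      simp [hpnone, hpsome]
    rw [this]
  -- the two scalar sums
  set SF : ℝ := ∑ i : Idx t, ∑ j : Idx t,
    (if i = j then 0 else lam i j * (Fe j - Fe i)) with hSFdef
  set SQ : ℝ := ∑ i : Idx t, ∑ j : Idx t,
    (if i = j then 0 else lam i j * (⟪Gr j, X i - X j⟫ + (2 * L)⁻¹ * ‖Gr i - Gr j‖ ^ 2))
    with hSQdef
  -- value of SF from heq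
  have hSF : SF = (f (x t) - f xstar) - w * (f (x 0) - f xstar) := by
    have H1 := congrArg (vlinf F) heq
    rw [map_sum] at H1
    have hLHS : ∀ i : Idx t,
        vlinf F (∑ j : Idx t, if i = j then 0 else lam i j • avec t i j)
          = ∑ j : Idx t, (if i = j then 0 else lam i j * (Fe j - Fe i)) := by
      intro i
      rw [map_sum]
      refine Finset.sum_congr rfl fun j _ => ?_
      split_ifs with hij
      · simp
      · rw [map_smul, hav]
        simp
    rw [Finset.sum_congr rfl (fun i _ => hLHS i)] at H1
    rw [map_sub, map_smul, hav, hav] at H1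
    rw [hSFdef, H1]
    have e1 : Fe (some (Fin.last t)) = f (x t) - f xstar := by
      rw [hFe]; simp [hpsome, Fin.val_last]
    have e2 : Fe (some 0) = f (x 0) - f xstar := by
      rw [hFe]; simp [hpsome]
    have e3 : Fe none = 0 := by rw [hFe]; simp [hpnone]
    rw [e1, e2, e3]
    simp
  -- value of qlinf of Z
  have hqZ : qlinf P (v • Bmat t h L (some 0) none
      + ∑ i : Idx t, ∑ j : Idx t,
          if i = j then 0 else lam i j • (Amat t h L i j + (2 * L)⁻¹ • Cmat t i j))
      = v * ‖x 0 - xstar‖ ^ 2 + SQ := by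
    rw [map_add, map_smul, hB, smul_eq_mul]
    congr 1
    rw [map_sum]
    rw [hSQdef]
    refine Finset.sum_congr rfl fun i _ => ?_
    rw [map_sum]
    refine Finset.sum_congr rfl fun j _ => ?_
    split_ifs with hij
    · simp
    · rw [map_smul, map_add, map_smul, hA, hC]
      simp
  have hZ0 : 0 ≤ v * ‖x 0 - xstar‖ ^ 2 + SQ := by
    rw [← hqZ]
    exact qlinf_nonneg P hZ
  -- interpolation inequalities
  have hQ : ∀ i j : Idx t,
      (Fe j - Fe i) + (⟪Gr j, X i - X j⟫ + (2 * L)⁻¹ * ‖Gr i - Gr j‖ ^ 2) ≤ 0 := by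
    intro i j
    have hint := interp_ineq hc hd hL hLip (p i) (p j)
    have hXX : X i - X j = p i - p j := by rw [hX]; exact sub_sub_sub_cancel_right _ _ _
    rw [hXX]
    rw [hGr, hFe]
    linarith
  -- combined nonpositivity
  have hsum : SF + SQ ≤ 0 := by
    rw [hSFdef, hSQdef, ← Finset.sum_add_distrib]
    refine Finset.sum_nonpos fun i _ => ?_
    rw [← Finset.sum_add_distrib]
    refine Finset.sum_nonpos fun j _ => ?_
    split_ifs with hij
    · simp
    · rw [← mul_add]
      exact mul_nonpos_iff.mpr (Or.inl ⟨hlam i j hij, hQ i j⟩)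
  linarith

end
end

section
/- Fix t ≥ 1, h ∈ ℝ^t, ε ≥ 0, and Δ ∈ (0,1/2], and use the normalized (L = 1) PEP notation with block maps m_h and M_h. Suppose (λ,γ) satisfies: Σ_{i≠j} λ_{i,j}·a_{i,j} = a_{⋆,t} − a_{⋆,0}; Σ_{i≠j} γ_{i,j}·a_{i,j} = 2(Σ_{i=0}^{t−1} h_i)·a_{⋆,0}; m_h(λ) = 0; λ_{i,j} ≥ 0 and λ_{i,j} + Δ·γ_{i,j} ≥ 0 for all i ≠ j; and the two matrices [[ Σ_{i=0}^{t−1}(h_i+ε), m_h(γ)ᵀ ], [ m_h(γ), M_h(λ) ]] and [[ Σ_{i=0}^{t−1}(h_i+ε), m_h(γ)ᵀ ], [ m_h(γ), M_h(λ+Δγ) ]] are positive semidefinite. Then for every δ ∈ [0,Δ], the multiplier array λ + δ·γ satisfies: (λ+δγ)_{i,j} ≥ 0 for all i ≠ j; Σ_{i≠j}(λ+δγ)_{i,j}·a_{i,j} = a_{⋆,t} − (1 − 2(Σ_{i=0}^{t−1} h_i)·δ)·a_{⋆,0}; and Z_{h,ε}(λ+δγ, δ) ⪰ 0. -/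
open scoped BigOperators

noncomputable section

/-- The `λ`-linear part `Σ_{i≠j} λ_{i,j} (A_{i,j} + ½ C_{i,j})` of `Z_{h,ε}(λ,δ)`
in the normalized (`L = 1`) PEP notation. -/
def Zlin (t : ℕ) (h : ℕ → ℝ) (lam : Idx t → Idx t → ℝ) :
    Matrix (Fin (t + 2)) (Fin (t + 2)) ℝ :=
  ∑ i : Idx t, ∑ j : Idx t,
    if i = j then 0 else lam i j • (Amat t h 1 i j + (2 : ℝ)⁻¹ • Cmat t i j)

/-- `Z_{h,ε}(λ,δ)` in the normalized (`L = 1`) PEP notation. -/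
def Zfun (t : ℕ) (h : ℕ → ℝ) (ε : ℝ) (lam : Idx t → Idx t → ℝ) (δ : ℝ) :
    Matrix (Fin (t + 2)) (Fin (t + 2)) ℝ :=
  ((∑ i ∈ Finset.range t, (h i + ε)) * δ ^ 2) • Bmat t h 1 (some 0) none + Zlin t h lam

/-- The off-diagonal block `m_h(λ) ∈ ℝ^{t+1}` (first row of `Z` minus its corner). -/
def mvec (t : ℕ) (h : ℕ → ℝ) (lam : Idx t → Idx t → ℝ) : Fin (t + 1) → ℝ :=
  fun j => Zlin t h lam 0 j.succ

/-- The lower-right block `M_h(λ) ∈ ℝ^{(t+1)×(t+1)}` of `Z`. -/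
def Mmat (t : ℕ) (h : ℕ → ℝ) (lam : Idx t → Idx t → ℝ) :
    Matrix (Fin (t + 1)) (Fin (t + 1)) ℝ :=
  Matrix.of fun a b => Zlin t h lam a.succ b.succ

/-- The `(t+2)×(t+2)` block matrix `[[c, mᵀ], [m, M]]`. -/
def blockMat (t : ℕ) (c : ℝ) (m : Fin (t + 1) → ℝ) (M : Matrix (Fin (t + 1)) (Fin (t + 1)) ℝ) :
    Matrix (Fin (t + 2)) (Fin (t + 2)) ℝ :=
  Matrix.of fun a b =>
    Fin.cases (Fin.cases c (fun j => m j) b) (fun i => Fin.cases (m i) (fun j => M i j) b) a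

-- auxiliary lemmas
lemma gvec_zero (t : ℕ) (k : Idx t) : gvec t k 0 = 0 := by
  cases k <;> simp [gvec, evec]

lemma Zlin_symm (t : ℕ) (h : ℕ → ℝ) (lam : Idx t → Idx t → ℝ) (a b : Fin (t + 2)) :
    Zlin t h lam a b = Zlin t h lam b a := by
  simp only [Zlin, Matrix.sum_apply]
  refine Finset.sum_congr rfl fun i _ => Finset.sum_congr rfl fun j _ => ?_
  rcases eq_or_ne i j with rfl | hij
  · simp
  · simp only [if_neg hij, Matrix.smul_apply, Matrix.add_apply, Amat, Cmat, sop,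
      Matrix.of_apply, Pi.sub_apply, smul_eq_mul]
    ring

lemma Zlin_corner (t : ℕ) (h : ℕ → ℝ) (lam : Idx t → Idx t → ℝ) :
    Zlin t h lam 0 0 = 0 := by
  simp only [Zlin, Matrix.sum_apply]
  refine Finset.sum_eq_zero fun i _ => Finset.sum_eq_zero fun j _ => ?_
  rcases eq_or_ne i j with rfl | hij
  · simp
  · simp [if_neg hij, Amat, Cmat, sop, gvec_zero]

lemma Zlin_comb (t : ℕ) (h : ℕ → ℝ) (lam gam : Idx t → Idx t → ℝ) (c : ℝ) :
    Zlin t h (fun i j => lam i j + c * gam i j) = Zlin t h lam + c • Zlin t h gam := by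
  simp only [Zlin, Finset.smul_sum, ← Finset.sum_add_distrib]
  refine Finset.sum_congr rfl fun i _ => Finset.sum_congr rfl fun j _ => ?_
  split <;> simp [add_smul, mul_smul] <;> abel

lemma psd_smul {n : Type*} [Fintype n] {M : Matrix n n ℝ} (hM : M.PosSemidef)
    {c : ℝ} (hc : 0 ≤ c) : (c • M).PosSemidef := by
  refine ⟨?_, fun x => ?_⟩
  · rw [Matrix.IsHermitian, Matrix.conjTranspose_smul, star_trivial, hM.1]
  · exact (hM.smul hc).2 x

lemma Bmat_entry (t : ℕ) (h : ℕ → ℝ) (a b : Fin (t + 2)) :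
    Bmat t h 1 (some 0) none a b
      = (if a = 0 then (1:ℝ) else 0) * (if b = 0 then 1 else 0) := by
  have hx : ∀ k, xvec t h 1 (some 0) k - xvec t h 1 none k = evec t 0 k := by
    intro k; simp [xvec]
  simp only [Bmat, sop, Matrix.of_apply, Pi.sub_apply, hx, evec, Fin.ext_iff, Fin.val_zero]
  split_ifs <;> ring

/-- Finite-dimensional core of the certificate theorem: a feasible pair `(λ, γ)` in
`S_{h,ε,Δ}` yields, via the affine family `λ + δ γ`, a member of `R_{h,ε,δ}` for every
`δ ∈ [0, Δ]`: nonnegativity, the linear equality, and `Z_{h,ε}(λ+δγ, δ) ⪰ 0`. -/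
theorem certificate_gives_dual_family (t : ℕ) (ht : 1 ≤ t) (h : ℕ → ℝ)
    (ε : ℝ) (hε : 0 ≤ ε) (Δ : ℝ) (hΔ : 0 < Δ) (hΔhalf : Δ ≤ 1 / 2)
    (lam gam : Idx t → Idx t → ℝ)
    (heq1 : (∑ i : Idx t, ∑ j : Idx t, if i = j then 0 else lam i j • avec t i j)
      = avec t none (some (Fin.last t)) - avec t none (some 0))
    (heq2 : (∑ i : Idx t, ∑ j : Idx t, if i = j then 0 else gam i j • avec t i j)
      = (2 * ∑ i ∈ Finset.range t, h i) • avec t none (some 0))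
    (hm : mvec t h lam = 0)
    (hlam : ∀ i j : Idx t, i ≠ j → 0 ≤ lam i j)
    (hlamgam : ∀ i j : Idx t, i ≠ j → 0 ≤ lam i j + Δ * gam i j)
    (hZ1 : (blockMat t (∑ i ∈ Finset.range t, (h i + ε)) (mvec t h gam)
      (Mmat t h lam)).PosSemidef)
    (hZ2 : (blockMat t (∑ i ∈ Finset.range t, (h i + ε)) (mvec t h gam)
      (Mmat t h (fun i j => lam i j + Δ * gam i j))).PosSemidef) :
    ∀ δ : ℝ, 0 ≤ δ → δ ≤ Δ →
      (∀ i j : Idx t, i ≠ j → 0 ≤ lam i j + δ * gam i j) ∧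
      ((∑ i : Idx t, ∑ j : Idx t,
          if i = j then 0 else (lam i j + δ * gam i j) • avec t i j)
        = avec t none (some (Fin.last t))
          - (1 - 2 * (∑ i ∈ Finset.range t, h i) * δ) • avec t none (some 0)) ∧
      (Zfun t h ε (fun i j => lam i j + δ * gam i j) δ).PosSemidef := by
  intro δ hδ0 hδΔ
  refine ⟨?_, ?_, ?_⟩
  · intro i j hij
    have h1 := hlam i j hij
    have h2 := hlamgam i j hij
    nlinarith [mul_nonneg (sub_nonneg.mpr hδΔ) h1, mul_nonneg hδ0 h2]
  · have e1 : ∀ i j : Idx t,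
        (if i = j then (0 : Fin (t+1) → ℝ) else (lam i j + δ * gam i j) • avec t i j)
        = (if i = j then 0 else lam i j • avec t i j)
          + δ • (if i = j then 0 else gam i j • avec t i j) := by
      intro i j; split <;> simp [add_smul, mul_smul]
    simp only [e1, Finset.sum_add_distrib, ← Finset.smul_sum]
    rw [heq1, heq2]
    funext k
    simp only [Pi.add_apply, Pi.sub_apply, Pi.smul_apply, smul_eq_mul]
    ring
  · set c := ∑ i ∈ Finset.range t, (h i + ε) with hc
    set θ := δ / Δ with hθdef
    have hθΔ : θ * Δ = δ := div_mul_cancel₀ δ hΔ.ne'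
    have hθ0 : 0 ≤ θ := div_nonneg hδ0 hΔ.le
    have h1θ : 0 ≤ 1 - θ := by
      have : θ ≤ 1 := (div_le_one hΔ).mpr hδΔ
      linarith
    set D := Matrix.diagonal (fun i : Fin (t+2) => if i = 0 then δ else 1) with hDdef
    have hDH : D.conjTranspose = D := by
      rw [hDdef, Matrix.diagonal_conjTranspose]
      simp
    have key : Zfun t h ε (fun i j => lam i j + δ * gam i j) δ
        = (1 - θ) • (D * (blockMat t c (mvec t h gam) (Mmat t h lam)) * D)
          + θ • (D * (blockMat t c (mvec t h gam)
              (Mmat t h (fun i j => lam i j + Δ * gam i j))) * D) := by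
      ext a b
      have hZd : ∀ a b, Zlin t h (fun i j => lam i j + δ * gam i j) a b
          = Zlin t h lam a b + δ * Zlin t h gam a b := by
        intro a b; rw [Zlin_comb]; simp
      have hZD : ∀ a b, Zlin t h (fun i j => lam i j + Δ * gam i j) a b
          = Zlin t h lam a b + Δ * Zlin t h gam a b := by
        intro a b; rw [Zlin_comb]; simp
      simp only [Zfun, Matrix.add_apply, Matrix.smul_apply, smul_eq_mul, Bmat_entry,
        hDdef, Matrix.mul_diagonal, Matrix.diagonal_mul, hZd]
      induction a using Fin.cases with
      | zero =>
        induction b using Fin.cases with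
        | zero =>
          simp only [blockMat, Matrix.of_apply, Fin.cases_zero, if_pos rfl, if_true,
            Zlin_corner]
          ring
        | succ j =>
          have hmj : Zlin t h lam 0 j.succ = 0 := congrFun hm j
          have hgj : Zlin t h gam 0 j.succ = mvec t h gam j := rfl
          simp only [blockMat, Matrix.of_apply, Fin.cases_zero, Fin.cases_succ,
            if_pos rfl, if_true, if_neg (Fin.succ_ne_zero j), hmj, hgj]
          ring
      | succ i =>
        induction b using Fin.cases with
        | zero =>
          have hmi : Zlin t h lam i.succ 0 = 0 := by
            rw [Zlin_symm]; exact congrFun hm i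
          have hgi : Zlin t h gam i.succ 0 = mvec t h gam i := Zlin_symm t h gam i.succ 0
          simp only [blockMat, Matrix.of_apply, Fin.cases_zero, Fin.cases_succ,
            if_pos rfl, if_true, if_neg (Fin.succ_ne_zero i), hmi, hgi]
          ring
        | succ j =>
          simp only [blockMat, Matrix.of_apply, Fin.cases_succ,
            if_neg (Fin.succ_ne_zero i), if_neg (Fin.succ_ne_zero j), Mmat, hZD]
          linear_combination (-(Zlin t h gam i.succ j.succ)) * hθΔ
    rw [key]
    have P1 : (D * (blockMat t c (mvec t h gam) (Mmat t h lam)) * D).PosSemidef := by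
      have := hZ1.mul_mul_conjTranspose_same D
      rwa [hDH] at this
    have P2 : (D * (blockMat t c (mvec t h gam)
        (Mmat t h (fun i j => lam i j + Δ * gam i j))) * D).PosSemidef := by
      have := hZ2.mul_mul_conjTranspose_same D
      rwa [hDH] at this
    exact (psd_smul P1 h1θ).add (psd_smul P2 hθ0)

end
end
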